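/- Let A be a unital C*-algebra, N ≥ 1, and let x_1, …, x_N ∈ A satisfy ∑_i x_i x_i* = 1, ∑_i x_i* x_i = 1, x_i x_j = x_j x_i for all i, j, and ∑_{i,j} x_i x_j x_i* x_j* = 1. Then x_i x_j* = x_j* x_i for all i, j; in particular the C*-algebra generated by x_1,…,x_N is commutative. -/

import Mathlib

lemma aux_sum_zero {A : Type*} [NormedRing A] [StarRing A] [CStarRing A]
    [NormedAlgebra ℂ A] [StarModule ℂ A] [CompleteSpace A]
    {ι : Type*} {s : Finset ι} (f : ι → A) (h : ∑ i ∈ s, star (f i) * f i = 0) :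
    ∀ i ∈ s, f i = 0 := by
  letI : CStarAlgebra A := { }
  letI := CStarAlgebra.spectralOrder A
  haveI := CStarAlgebra.spectralOrderedRing A
  intro i hi
  have h0 : ∀ j ∈ s, (0:A) ≤ star (f j) * f j := fun j _ => star_mul_self_nonneg _
  have := (Finset.sum_eq_zero_iff_of_nonneg h0).mp h i hi
  exact (CStarRing.star_mul_self_eq_zero_iff _).mp this

theorem stmt_5 {A : Type*} [NormedRing A] [StarRing A] [CStarRing A]
    [NormedAlgebra ℂ A] [StarModule ℂ A] [CompleteSpace A]
    {N : ℕ} (hN : 1 ≤ N) (x : Fin N → A)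
    (h1 : ∑ i, x i * star (x i) = 1)
    (h2 : ∑ i, star (x i) * x i = 1)
    (hcomm : ∀ i j, x i * x j = x j * x i)
    (h3 : ∑ i, ∑ j, x i * x j * star (x i) * star (x j) = 1) :
    (∀ i j, x i * star (x j) = star (x j) * x i) ∧
    ∀ a ∈ (StarAlgebra.adjoin ℂ (Set.range x)).topologicalClosure,
      ∀ b ∈ (StarAlgebra.adjoin ℂ (Set.range x)).topologicalClosure, a * b = b * a := by
  have hstar : ∀ i j, star (x i) * star (x j) = star (x j) * star (x i) := by
    intro i j
    simpa [star_mul] using congrArg star (hcomm j i)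
  -- the four double sums
  have S_PR : ∑ i : Fin N, ∑ j : Fin N, x j * star (x i) * (x i * star (x j)) = 1 := by
    rw [Finset.sum_comm]
    calc ∑ j : Fin N, ∑ i : Fin N, x j * star (x i) * (x i * star (x j))
        = ∑ j : Fin N, x j * (∑ i, star (x i) * x i) * star (x j) := by
          refine Finset.sum_congr rfl fun j _ => ?_
          rw [Finset.mul_sum, Finset.sum_mul]
          exact Finset.sum_congr rfl fun i _ => by simp only [mul_assoc]
      _ = 1 := by simp only [h2, mul_one]; exact h1
  have S_QS : ∑ i : Fin N, ∑ j : Fin N, star (x i) * x j * (star (x j) * x i) = 1 := by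
    calc ∑ i : Fin N, ∑ j : Fin N, star (x i) * x j * (star (x j) * x i)
        = ∑ i : Fin N, star (x i) * (∑ j, x j * star (x j)) * x i := by
          refine Finset.sum_congr rfl fun i _ => ?_
          rw [Finset.mul_sum, Finset.sum_mul]
          exact Finset.sum_congr rfl fun j _ => by simp only [mul_assoc]
      _ = 1 := by simp only [h1, mul_one]; exact h2
  have S_PS : ∑ i : Fin N, ∑ j : Fin N, x j * star (x i) * (star (x j) * x i) = 1 := by
    have hB : ∀ i j : Fin N, x j * star (x i) * (star (x j) * x i)
        = (x j * star (x j)) * (star (x i) * x i) := by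
      intro i j
      rw [mul_assoc, ← mul_assoc (star (x i)), hstar i j, mul_assoc, ← mul_assoc]
    calc ∑ i : Fin N, ∑ j : Fin N, x j * star (x i) * (star (x j) * x i)
        = ∑ i : Fin N, ∑ j : Fin N, (x j * star (x j)) * (star (x i) * x i) := by
          exact Finset.sum_congr rfl fun i _ => Finset.sum_congr rfl fun j _ => hB i j
      _ = (∑ j, x j * star (x j)) * (∑ i, star (x i) * x i) := by
          rw [Finset.sum_comm, Finset.sum_mul_sum]
      _ = 1 := by rw [h1, h2, one_mul]
  have S_QR : ∑ i : Fin N, ∑ j : Fin N, star (x i) * x j * (x i * star (x j)) = 1 := by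
    have hC : ∀ i j : Fin N, star (x i) * x j * (x i * star (x j))
        = (star (x i) * x i) * (x j * star (x j)) := by
      intro i j
      rw [mul_assoc, ← mul_assoc (x j), hcomm j i, mul_assoc, ← mul_assoc]
    calc ∑ i : Fin N, ∑ j : Fin N, star (x i) * x j * (x i * star (x j))
        = ∑ i : Fin N, ∑ j : Fin N, (star (x i) * x i) * (x j * star (x j)) := by
          exact Finset.sum_congr rfl fun i _ => Finset.sum_congr rfl fun j _ => hC i j
      _ = (∑ i, star (x i) * x i) * (∑ j, x j * star (x j)) := by rw [Finset.sum_mul_sum]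
      _ = 1 := by rw [h1, h2, one_mul]
  set y : Fin N → Fin N → A := fun i j => x i * star (x j) - star (x j) * x i with hy
  have expand : ∀ i j, star (y i j) * y i j =
      (x j * star (x i) * (x i * star (x j)) - x j * star (x i) * (star (x j) * x i))
      - (star (x i) * x j * (x i * star (x j)) - star (x i) * x j * (star (x j) * x i)) := by
    intro i j
    simp only [hy, star_sub, star_mul, star_star, sub_mul, mul_sub]
    abel
  have hsum : ∑ i : Fin N, ∑ j : Fin N, star (y i j) * y i j = 0 := by
    calc ∑ i : Fin N, ∑ j : Fin N, star (y i j) * y i j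
        = ∑ i : Fin N, ∑ j : Fin N,
            ((x j * star (x i) * (x i * star (x j)) - x j * star (x i) * (star (x j) * x i))
            - (star (x i) * x j * (x i * star (x j)) - star (x i) * x j * (star (x j) * x i))) :=
          Finset.sum_congr rfl fun i _ => Finset.sum_congr rfl fun j _ => expand i j
      _ = ((∑ i : Fin N, ∑ j : Fin N, x j * star (x i) * (x i * star (x j)))
            - ∑ i : Fin N, ∑ j : Fin N, x j * star (x i) * (star (x j) * x i))
          - ((∑ i : Fin N, ∑ j : Fin N, star (x i) * x j * (x i * star (x j)))
            - ∑ i : Fin N, ∑ j : Fin N, star (x i) * x j * (star (x j) * x i)) := by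
          simp only [Finset.sum_sub_distrib]
      _ = 0 := by rw [S_PR, S_PS, S_QR, S_QS]; simp
  have key : ∀ i j, x i * star (x j) = star (x j) * x i := by
    have h0 : ∑ p : Fin N × Fin N, star (y p.1 p.2) * y p.1 p.2 = 0 := by
      rw [Fintype.sum_prod_type]; exact hsum
    intro i j
    have := aux_sum_zero (fun p : Fin N × Fin N => y p.1 p.2) h0 (i, j) (Finset.mem_univ _)
    exact sub_eq_zero.mp this
  refine ⟨key, ?_⟩
  -- commutativity of the generated star subalgebra
  set S := StarAlgebra.adjoin ℂ (Set.range x) with hSdef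
  have hgen : ∀ b ∈ S, ∀ i, x i * b = b * x i ∧ star (x i) * b = b * star (x i) := by
    intro b hb
    induction hb using StarAlgebra.adjoin_induction with
    | mem g hg =>
        obtain ⟨j, rfl⟩ := hg
        intro i
        exact ⟨hcomm i j, (key j i).symm⟩
    | algebraMap r => intro i; exact ⟨(Algebra.commutes r _).symm, (Algebra.commutes r _).symm⟩
    | add c d hc hd ihc ihd =>
        intro i
        constructor
        · rw [mul_add, add_mul, (ihc i).1, (ihd i).1]
        · rw [mul_add, add_mul, (ihc i).2, (ihd i).2]
    | mul c d hc hd ihc ihd =>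
        intro i
        constructor
        · rw [← mul_assoc, (ihc i).1, mul_assoc, (ihd i).1, mul_assoc]
        · rw [← mul_assoc, (ihc i).2, mul_assoc, (ihd i).2, mul_assoc]
    | star c hc ihc =>
        intro i
        constructor
        · calc x i * star c = star (c * star (x i)) := by simp [star_mul]
            _ = star (star (x i) * c) := by rw [(ihc i).2]
            _ = star c * x i := by simp [star_mul]
        · calc star (x i) * star c = star (c * x i) := by simp [star_mul]
            _ = star (x i * c) := by rw [(ihc i).1]
            _ = star c * star (x i) := by simp [star_mul]
  have hS : ∀ a ∈ S, ∀ b ∈ S, a * b = b * a ∧ star a * b = b * star a := by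
    intro a ha
    induction ha using StarAlgebra.adjoin_induction with
    | mem g hg =>
        obtain ⟨i, rfl⟩ := hg
        intro b hb
        exact hgen b hb i
    | algebraMap r =>
        intro b hb
        rw [← algebraMap_star_comm]
        exact ⟨Algebra.commutes r b, Algebra.commutes (star r) b⟩
    | add c d hc hd ihc ihd =>
        intro b hb
        constructor
        · rw [add_mul, mul_add, (ihc b hb).1, (ihd b hb).1]
        · rw [star_add, add_mul, mul_add, (ihc b hb).2, (ihd b hb).2]
    | mul c d hc hd ihc ihd =>
        intro b hb
        constructor
        · rw [mul_assoc, (ihd b hb).1, ← mul_assoc, (ihc b hb).1, mul_assoc]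
        · rw [star_mul, mul_assoc, (ihc b hb).2, ← mul_assoc, (ihd b hb).2, mul_assoc]
    | star c hc ihc =>
        intro b hb
        exact ⟨(ihc b hb).2, by simpa using (ihc b hb).1⟩
  intro a ha b hb
  have hclosed : IsClosed {p : A × A | p.1 * p.2 = p.2 * p.1} :=
    isClosed_eq (continuous_fst.mul continuous_snd) (continuous_snd.mul continuous_fst)
  have hsub : ((S : Set A) ×ˢ (S : Set A)) ⊆ {p : A × A | p.1 * p.2 = p.2 * p.1} :=
    fun p hp => (hS p.1 hp.1 p.2 hp.2).1
  have hmem : (a, b) ∈ closure ((S : Set A) ×ˢ (S : Set A)) := by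
    rw [closure_prod_eq]
    refine ⟨?_, ?_⟩
    · rw [← StarSubalgebra.topologicalClosure_coe]; exact ha
    · rw [← StarSubalgebra.topologicalClosure_coe]; exact hb
  exact hclosed.closure_subset_iff.mpr hsub hmem
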